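/- arXiv:2101.05915 — 2 statements merged into one kernel-verified Lean document; each statement's English description precedes it below -/
import Mathlib

section
/- Define the conjugate exponent r'(x) = r(x)/(r(x) − 1), so that 1/r(x) + 1/r'(x) = 1 for all x ∈ Ω, and set r'₋ = r₊/(r₊ − 1). Let u, v : Ω → ℝ be measurable with ρ_{r(·)}(u) < ∞ and ρ_{r'(·)}(v) < ∞. Then ∫_Ω |u(x) v(x)| dμ(x) ≤ (1/r₋ + 1/r'₋) · ‖u‖_{r(·)} · ‖v‖_{r'(·)}. -/
open MeasureTheory Filter Topology ENNReal

/-- The modular `ρ_{r(·)}(u) = ∫_Ω |u(x)|^{r(x)} dμ(x)` of a variable-exponent Lebesgue space. -/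
noncomputable def vmodular {Ω : Type*} [MeasurableSpace Ω] (μ : Measure Ω)
    (r : Ω → ℝ) (u : Ω → ℝ) : ℝ≥0∞ :=
  ∫⁻ x, ENNReal.ofReal (|u x| ^ (r x)) ∂μ

/-- The Luxemburg norm `‖u‖_{r(·)} = inf { λ > 0 : ρ_{r(·)}(u/λ) ≤ 1 }`. -/
noncomputable def luxNorm {Ω : Type*} [MeasurableSpace Ω] (μ : Measure Ω)
    (r : Ω → ℝ) (u : Ω → ℝ) : ℝ :=
  sInf {lam : ℝ | 0 < lam ∧ vmodular μ r (fun x => u x / lam) ≤ 1}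

/-- Young's inequality with the exponent varying in an interval. -/
lemma young_var {p rm rp a b : ℝ} (hrm : 1 < rm) (h1 : rm ≤ p) (h2 : p ≤ rp)
    (ha : 0 ≤ a) (hb : 0 ≤ b) :
    a * b ≤ (1 / rm) * a ^ p + ((rp - 1) / rp) * b ^ (p / (p - 1)) := by
  have hp : 1 < p := lt_of_lt_of_le hrm h1
  have hrp : 1 < rp := lt_of_lt_of_le hp h2
  have hpq := Real.HolderConjugate.conjExponent hp
  refine (Real.young_inequality_of_nonneg ha hb hpq).trans (add_le_add ?_ ?_)
  · rw [div_eq_inv_mul, one_div]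
    refine mul_le_mul_of_nonneg_right ?_ (Real.rpow_nonneg ha p)
    exact inv_anti₀ (by linarith) h1
  · rw [div_eq_inv_mul, Real.conjExponent, inv_div]
    refine mul_le_mul_of_nonneg_right ?_ (Real.rpow_nonneg hb _)
    rw [div_le_div_iff₀ (by linarith) (by linarith)]
    nlinarith

/-- If the modular is finite, the admissible set for the Luxemburg norm is nonempty. -/
lemma admissible_nonempty {Ω : Type*} [MeasurableSpace Ω] (μ : Measure Ω)
    (s : Ω → ℝ) (sm : ℝ) (hsm : 1 ≤ sm) (hs : ∀ x, sm ≤ s x)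
    (w : Ω → ℝ) (hfin : vmodular μ s w < ⊤) :
    ∃ lam : ℝ, 0 < lam ∧ vmodular μ s (fun x => w x / lam) ≤ 1 := by
  set L := (vmodular μ s w).toReal with hL
  refine ⟨max 1 L, lt_of_lt_of_le one_pos (le_max_left _ _), ?_⟩
  set lam := max 1 L with hlamdef
  have hlam1 : (1 : ℝ) ≤ lam := le_max_left _ _
  have hlam0 : (0 : ℝ) < lam := lt_of_lt_of_le one_pos hlam1
  have hpowpos : (0 : ℝ) < lam ^ sm := Real.rpow_pos_of_pos hlam0 _
  have hpow : L ≤ lam ^ sm := by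
    refine (le_max_right 1 L).trans ?_
    calc lam = lam ^ (1:ℝ) := (Real.rpow_one lam).symm
      _ ≤ lam ^ sm := Real.rpow_le_rpow_of_exponent_le hlam1 hsm
  have hptwise : ∀ x, ENNReal.ofReal (|w x / lam| ^ s x) ≤
      ENNReal.ofReal (|w x| ^ s x) * ENNReal.ofReal ((lam ^ sm)⁻¹) := by
    intro x
    rw [← ENNReal.ofReal_mul (Real.rpow_nonneg (abs_nonneg _) _)]
    refine ENNReal.ofReal_le_ofReal ?_
    rw [abs_div, abs_of_pos hlam0,
        Real.div_rpow (abs_nonneg _) hlam0.le, div_eq_mul_inv]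
    refine mul_le_mul_of_nonneg_left ?_ (Real.rpow_nonneg (abs_nonneg _) _)
    refine inv_anti₀ hpowpos ?_
    exact Real.rpow_le_rpow_of_exponent_le hlam1 (hs x)
  calc vmodular μ s (fun x => w x / lam)
      ≤ ∫⁻ x, ENNReal.ofReal (|w x| ^ s x) * ENNReal.ofReal ((lam ^ sm)⁻¹) ∂μ :=
        lintegral_mono hptwise
    _ = vmodular μ s w * ENNReal.ofReal ((lam ^ sm)⁻¹) :=
        lintegral_mul_const' _ _ ENNReal.ofReal_ne_top
    _ ≤ ENNReal.ofReal (lam ^ sm) * ENNReal.ofReal ((lam ^ sm)⁻¹) := by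
        refine mul_le_mul_left ?_ _
        rw [← ENNReal.ofReal_toReal hfin.ne]
        exact ENNReal.ofReal_le_ofReal hpow
    _ = 1 := by
        rw [← ENNReal.ofReal_mul hpowpos.le, mul_inv_cancel₀ hpowpos.ne',
          ENNReal.ofReal_one]

theorem variable_exponent_holder
    {Ω : Type*} [MeasurableSpace Ω] (μ : Measure Ω)
    (r : Ω → ℝ) (rm rp : ℝ) (hr : Measurable r)
    (hrm : 1 < rm) (hbound : ∀ x, rm ≤ r x ∧ r x ≤ rp)
    (u v : Ω → ℝ) (hu : Measurable u) (hv : Measurable v)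
    (hufin : vmodular μ r u < ⊤)
    (hvfin : vmodular μ (fun x => r x / (r x - 1)) v < ⊤) :
    ∫⁻ x, ENNReal.ofReal |u x * v x| ∂μ ≤
      ENNReal.ofReal ((1 / rm + 1 / (rp / (rp - 1))) *
        luxNorm μ r u * luxNorm μ (fun x => r x / (r x - 1)) v) := by
  rcases isEmpty_or_nonempty Ω with hΩ | hΩ
  · simp [Measure.eq_zero_of_isEmpty μ]
  -- basic facts about exponents
  obtain ⟨x₀⟩ := hΩ
  have hrp : 1 < rp := lt_of_lt_of_le hrm ((hbound x₀).1.trans (hbound x₀).2)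
  set q : Ω → ℝ := fun x => r x / (r x - 1) with hqdef
  have hqm : ∀ x, rp / (rp - 1) ≤ q x := by
    intro x
    obtain ⟨h1, h2⟩ := hbound x
    rw [div_le_div_iff₀ (by linarith) (by linarith)]
    nlinarith
  have hqm1 : (1 : ℝ) < rp / (rp - 1) := by
    rw [lt_div_iff₀ (by linarith)]; linarith
  set C : ℝ := 1 / rm + (rp - 1) / rp with hCdef
  have hC : 0 < C := by
    have : 0 < 1 / rm := by positivity
    have : 0 < (rp - 1) / rp := by
      apply div_pos <;> linarith
    rw [hCdef]; linarith
  -- the admissible sets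
  set S := {lam : ℝ | 0 < lam ∧ vmodular μ r (fun x => u x / lam) ≤ 1} with hSdef
  set T := {lam : ℝ | 0 < lam ∧ vmodular μ q (fun x => v x / lam) ≤ 1} with hTdef
  obtain ⟨lam₀, hlam₀⟩ := admissible_nonempty μ r rm hrm.le (fun x => (hbound x).1) u hufin
  obtain ⟨m₀, hm₀⟩ := admissible_nonempty μ q (rp / (rp - 1)) hqm1.le hqm v hvfin
  have hSne : S.Nonempty := ⟨lam₀, hlam₀⟩
  have hTne : T.Nonempty := ⟨m₀, hm₀⟩
  -- key estimate
  have key : ∀ lam ∈ S, ∀ m ∈ T,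
      (∫⁻ x, ENNReal.ofReal |u x * v x| ∂μ) ≤ ENNReal.ofReal (C * lam * m) := by
    rintro lam ⟨hlam, hlamS⟩ m ⟨hm, hmT⟩
    have hptwise : ∀ x, ENNReal.ofReal |u x * v x| ≤
        ENNReal.ofReal (lam * m) *
          (ENNReal.ofReal (1 / rm) * ENNReal.ofReal (|u x / lam| ^ r x) +
           ENNReal.ofReal ((rp - 1) / rp) * ENNReal.ofReal (|v x / m| ^ q x)) := by
      intro x
      rw [← ENNReal.ofReal_mul (by positivity),
          ← ENNReal.ofReal_mul (div_nonneg (by linarith) (by linarith) : (0:ℝ) ≤ (rp-1)/rp),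
          ← ENNReal.ofReal_add (by positivity)
            (mul_nonneg (div_nonneg (by linarith) (by linarith))
              (Real.rpow_nonneg (abs_nonneg _) _)),
          ← ENNReal.ofReal_mul (by positivity)]
      refine ENNReal.ofReal_le_ofReal ?_
      have hy := young_var (p := r x) hrm (hbound x).1 (hbound x).2
        (abs_nonneg (u x / lam)) (abs_nonneg (v x / m))
      have heq : |u x * v x| = lam * m * (|u x / lam| * |v x / m|) := by
        rw [abs_mul, abs_div, abs_div, abs_of_pos hlam, abs_of_pos hm]
        field_simp
      rw [heq]
      exact mul_le_mul_of_nonneg_left hy (by positivity)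
    have hmeasA : Measurable fun x =>
        ENNReal.ofReal (1 / rm) * ENNReal.ofReal (|u x / lam| ^ r x) := by
      apply Measurable.const_mul
      exact (((hu.div_const lam).abs.pow hr)).ennreal_ofReal
    calc (∫⁻ x, ENNReal.ofReal |u x * v x| ∂μ)
        ≤ ∫⁻ x, ENNReal.ofReal (lam * m) *
            (ENNReal.ofReal (1 / rm) * ENNReal.ofReal (|u x / lam| ^ r x) +
             ENNReal.ofReal ((rp - 1) / rp) * ENNReal.ofReal (|v x / m| ^ q x)) ∂μ :=
          lintegral_mono hptwise
      _ = ENNReal.ofReal (lam * m) *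
            ∫⁻ x, (ENNReal.ofReal (1 / rm) * ENNReal.ofReal (|u x / lam| ^ r x) +
             ENNReal.ofReal ((rp - 1) / rp) * ENNReal.ofReal (|v x / m| ^ q x)) ∂μ :=
          lintegral_const_mul' _ _ ENNReal.ofReal_ne_top
      _ = ENNReal.ofReal (lam * m) *
            ((∫⁻ x, ENNReal.ofReal (1 / rm) * ENNReal.ofReal (|u x / lam| ^ r x) ∂μ) +
             ∫⁻ x, ENNReal.ofReal ((rp - 1) / rp) * ENNReal.ofReal (|v x / m| ^ q x) ∂μ) := by
          rw [lintegral_add_left hmeasA]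
      _ = ENNReal.ofReal (lam * m) *
            (ENNReal.ofReal (1 / rm) * vmodular μ r (fun x => u x / lam) +
             ENNReal.ofReal ((rp - 1) / rp) * vmodular μ q (fun x => v x / m)) := by
          rw [lintegral_const_mul' _ _ ENNReal.ofReal_ne_top,
              lintegral_const_mul' _ _ ENNReal.ofReal_ne_top]
          rfl
      _ ≤ ENNReal.ofReal (lam * m) *
            (ENNReal.ofReal (1 / rm) * 1 + ENNReal.ofReal ((rp - 1) / rp) * 1) := by
          gcongr
      _ = ENNReal.ofReal (C * lam * m) := by
          rw [mul_one, mul_one, ← ENNReal.ofReal_add (by positivity)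
              (div_nonneg (by linarith) (by linarith) : (0:ℝ) ≤ (rp-1)/rp),
            ← ENNReal.ofReal_mul (by positivity)]
          congr 1; rw [hCdef]; ring
  -- the left-hand side is finite
  set L := ∫⁻ x, ENNReal.ofReal |u x * v x| ∂μ with hLdef
  have hLfin : L ≠ ⊤ :=
    ((key lam₀ hlam₀ m₀ hm₀).trans_lt ENNReal.ofReal_lt_top).ne
  set t := L.toReal with htdef
  have ht : ∀ lam ∈ S, ∀ m ∈ T, t ≤ C * lam * m := by
    intro lam hlam m hm
    exact ENNReal.toReal_le_of_le_ofReal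
      (by have := hlam.1; have := hm.1; positivity) (key lam hlam m hm)
  -- pass to infima
  set Nu := luxNorm μ r u with hNu
  set Nv := luxNorm μ q v with hNv
  have hNuS : Nu = sInf S := rfl
  have hNvT : Nv = sInf T := rfl
  have hNu0 : 0 ≤ Nu := Real.sInf_nonneg (fun x hx => hx.1.le)
  have hNv0 : 0 ≤ Nv := Real.sInf_nonneg (fun x hx => hx.1.le)
  have step1 : ∀ m ∈ T, t ≤ C * Nu * m := by
    intro m hm
    have hmpos := hm.1
    have : t / (C * m) ≤ Nu := by
      rw [hNuS]
      refine le_csInf hSne (fun lam hlam => ?_)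
      rw [div_le_iff₀ (by positivity)]
      calc t ≤ C * lam * m := ht lam hlam m hm
        _ = lam * (C * m) := by ring
    calc t ≤ Nu * (C * m) := (div_le_iff₀ (by positivity)).1 this
      _ = C * Nu * m := by ring
  have hfinal : t ≤ C * Nu * Nv := by
    rcases eq_or_lt_of_le hNu0 with h0 | h0
    · obtain ⟨m, hm⟩ := hTne
      have h1 : t ≤ C * Nu * m := step1 m hm
      rw [← h0] at h1 ⊢
      simpa using h1
    · have h2 : t / (C * Nu) ≤ Nv := by
        rw [hNvT]
        refine le_csInf hTne fun m hm => ?_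
        rw [div_le_iff₀ (by positivity)]
        calc t ≤ C * Nu * m := step1 m hm
          _ = m * (C * Nu) := by ring
      calc t ≤ Nv * (C * Nu) := (div_le_iff₀ (by positivity)).1 h2
        _ = C * Nu * Nv := by ring
  have hconst : 1 / rm + 1 / (rp / (rp - 1)) = C := by
    rw [hCdef, one_div_div]
  rw [hconst]
  calc L = ENNReal.ofReal t := (ENNReal.ofReal_toReal hLfin).symm
    _ ≤ ENNReal.ofReal (C * Nu * Nv) := ENNReal.ofReal_le_ofReal hfinal
end

section
/- Let p > 1 and 1 < ϑ ≤ p be real numbers and define f : ℝ → ℝ by f(s) = s^{p−1}·ln s + s^{ϑ−1} for s > 1 and f(s) = (max(s,0))^{ϑ−1} for s ≤ 1, and set F(s) = ∫₀^s f(t) dt. Then f fails the Ambrosetti–Rabinowitz condition: for every θ > p and every M > 0 there exists s ≥ M such that θ·F(s) > f(s)·s. -/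
open Filter Topology intervalIntegral

theorem fails_ambrosetti_rabinowitz
    (p ϑ : ℝ) (hp : 1 < p) (hϑ1 : 1 < ϑ) (hϑp : ϑ ≤ p)
    (f : ℝ → ℝ)
    (hf : ∀ s : ℝ, f s =
      if 1 < s then s ^ (p - 1) * Real.log s + s ^ (ϑ - 1)
      else (max s 0) ^ (ϑ - 1))
    (F : ℝ → ℝ) (hF : ∀ s : ℝ, F s = ∫ t in (0:ℝ)..s, f t) :
    ∀ θ : ℝ, p < θ → ∀ M : ℝ, 0 < M → ∃ s : ℝ, M ≤ s ∧ θ * F s > f s * s := by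
  intro θ hθ M hM
  have hp0 : (0:ℝ) < p := by linarith
  have hϑ0 : (0:ℝ) < ϑ := by linarith
  -- the value of F on (1, ∞)
  have hFs : ∀ s : ℝ, 1 < s →
      F s = s ^ p * Real.log s / p - s ^ p / p ^ 2 + 1 / p ^ 2 + s ^ ϑ / ϑ := by
    intro s hs
    have hs0 : (0:ℝ) < s := by linarith
    -- integrability of f on [0,1]
    have heq01 : Set.EqOn f (fun t => t ^ (ϑ - 1)) (Set.uIcc (0:ℝ) 1) := by
      intro t ht
      rw [Set.uIcc_of_le (by norm_num : (0:ℝ) ≤ 1)] at ht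
      rw [hf t, if_neg (by linarith [ht.2]), max_eq_left ht.1]
    have hcont01 : ContinuousOn (fun t : ℝ => t ^ (ϑ - 1)) (Set.uIcc (0:ℝ) 1) := by
      intro x _
      exact (Real.continuousAt_rpow_const x (ϑ - 1) (Or.inr (by linarith))).continuousWithinAt
    have hint01 : IntervalIntegrable f MeasureTheory.volume 0 1 :=
      (hcont01.congr heq01).intervalIntegrable
    -- f on [1,s] agrees with the smooth formula
    have heq1s : Set.EqOn f (fun t => t ^ (p - 1) * Real.log t + t ^ (ϑ - 1))
        (Set.uIcc (1:ℝ) s) := by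
      intro t ht
      rw [Set.uIcc_of_le hs.le] at ht
      rcases lt_or_eq_of_le ht.1 with h1 | h1
      · rw [hf t, if_pos h1]
      · rw [hf t, if_neg (by rw [← h1]; exact lt_irrefl 1), ← h1]
        simp [Real.log_one]
    have hcont1s : ContinuousOn (fun t : ℝ => t ^ (p - 1) * Real.log t + t ^ (ϑ - 1))
        (Set.uIcc (1:ℝ) s) := by
      intro x hx
      rw [Set.uIcc_of_le hs.le] at hx
      have hx0 : (0:ℝ) < x := by linarith [hx.1]
      exact (((Real.continuousAt_rpow_const x (p - 1) (Or.inl hx0.ne')).mul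
        (Real.continuousAt_log hx0.ne')).add
        (Real.continuousAt_rpow_const x (ϑ - 1) (Or.inl hx0.ne'))).continuousWithinAt
    have hint1s : IntervalIntegrable f MeasureTheory.volume 1 s :=
      (hcont1s.congr heq1s).intervalIntegrable
    -- split the integral
    rw [hF s, ← intervalIntegral.integral_add_adjacent_intervals hint01 hint1s]
    -- first piece
    have e1 : (∫ t in (0:ℝ)..1, f t) = 1 / ϑ := by
      rw [intervalIntegral.integral_congr heq01]
      rw [integral_rpow (Or.inl (by linarith))]
      rw [sub_add_cancel]
      rw [Real.one_rpow, Real.zero_rpow hϑ0.ne']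
      ring
    -- second piece, via FTC
    have hderiv : ∀ t ∈ Set.uIcc (1:ℝ) s,
        HasDerivAt (fun t : ℝ => t ^ p * Real.log t / p - t ^ p / p ^ 2 + t ^ ϑ / ϑ)
          (t ^ (p - 1) * Real.log t + t ^ (ϑ - 1)) t := by
      intro t ht
      rw [Set.uIcc_of_le hs.le] at ht
      have ht0 : (0:ℝ) < t := by linarith [ht.1]
      have h1 : HasDerivAt (fun t : ℝ => t ^ p) (p * t ^ (p - 1)) t :=
        Real.hasDerivAt_rpow_const (Or.inl ht0.ne')
      have h2 : HasDerivAt Real.log t⁻¹ t := Real.hasDerivAt_log ht0.ne'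
      have h3 : HasDerivAt (fun t : ℝ => t ^ ϑ) (ϑ * t ^ (ϑ - 1)) t :=
        Real.hasDerivAt_rpow_const (Or.inl ht0.ne')
      have h4 := (((h1.mul h2).div_const p).sub (h1.div_const (p ^ 2))).add (h3.div_const ϑ)
      convert h4 using 1
      case e'_4 => rfl
      case e'_5 => rfl
      case e'_8 => rfl
      have htp : t ^ p * t⁻¹ = t ^ (p - 1) := by
        rw [Real.rpow_sub_one ht0.ne', div_eq_mul_inv]
      rw [← htp]
      field_simp
      ring
    have hintg : IntervalIntegrable (fun t : ℝ => t ^ (p - 1) * Real.log t + t ^ (ϑ - 1))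
        MeasureTheory.volume 1 s := hcont1s.intervalIntegrable
    have e2 : (∫ t in (1:ℝ)..s, f t) =
        (s ^ p * Real.log s / p - s ^ p / p ^ 2 + s ^ ϑ / ϑ) -
        (1 / ϑ - 1 / p ^ 2) := by
      rw [intervalIntegral.integral_congr heq1s,
        intervalIntegral.integral_eq_sub_of_hasDerivAt hderiv hintg]
      rw [Real.one_rpow, Real.one_rpow, Real.log_one]
      ring
    rw [e1, e2]
    ring
  -- choose s
  set C := θ / (p * (θ - p)) with hC
  have hC0 : 0 < C := by
    apply div_pos (by linarith)
    exact mul_pos hp0 (by linarith)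
  refine ⟨max M (Real.exp C), le_max_left _ _, ?_⟩
  set s := max M (Real.exp C) with hsdef
  have hexp : 1 < Real.exp C := by
    have h := Real.exp_lt_exp.2 hC0
    rwa [Real.exp_zero] at h
  have hs1 : 1 < s := lt_of_lt_of_le hexp (le_max_right _ _)
  have hs0 : (0:ℝ) < s := by linarith
  have hlog : C ≤ Real.log s := by
    calc C = Real.log (Real.exp C) := (Real.log_exp C).symm
    _ ≤ Real.log s := Real.log_le_log (Real.exp_pos C) (le_max_right _ _)
  -- compute both sides
  have hfs : f s * s = s ^ p * Real.log s + s ^ ϑ := by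
    rw [hf s, if_pos hs1]
    have e1 : s ^ (p - 1) * s = s ^ p := by
      rw [Real.rpow_sub_one hs0.ne', div_mul_cancel₀ _ hs0.ne']
    have e2 : s ^ (ϑ - 1) * s = s ^ ϑ := by
      rw [Real.rpow_sub_one hs0.ne', div_mul_cancel₀ _ hs0.ne']
    calc (s ^ (p - 1) * Real.log s + s ^ (ϑ - 1)) * s
        = (s ^ (p - 1) * s) * Real.log s + s ^ (ϑ - 1) * s := by ring
      _ = s ^ p * Real.log s + s ^ ϑ := by rw [e1, e2]
  rw [hfs, hFs s hs1]
  have hsp : (0:ℝ) < s ^ p := Real.rpow_pos_of_pos hs0 p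
  have hsϑ : (0:ℝ) < s ^ ϑ := Real.rpow_pos_of_pos hs0 ϑ
  -- key inequalities
  have k2 : θ ≤ Real.log s * (p * (θ - p)) := by
    have := mul_le_mul_of_nonneg_right hlog (le_of_lt (mul_pos hp0 (by linarith : (0:ℝ) < θ - p)))
    rwa [hC, div_mul_cancel₀ _ (mul_pos hp0 (by linarith : (0:ℝ) < θ - p)).ne'] at this
  have k3 : s ^ p * θ ≤ s ^ p * (Real.log s * (p * (θ - p))) :=
    mul_le_mul_of_nonneg_left k2 hsp.le
  have k4 : s ^ ϑ * ϑ ≤ θ * s ^ ϑ := by nlinarith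
  have key : θ * (s ^ p * Real.log s / p - s ^ p / p ^ 2 + 1 / p ^ 2 + s ^ ϑ / ϑ)
      - (s ^ p * Real.log s + s ^ ϑ)
      = (s ^ p * (Real.log s * (p * (θ - p))) - s ^ p * θ) / p ^ 2 + θ / p ^ 2
        + (θ * s ^ ϑ - s ^ ϑ * ϑ) / ϑ := by
    field_simp
    ring
  have h1 : 0 ≤ (s ^ p * (Real.log s * (p * (θ - p))) - s ^ p * θ) / p ^ 2 :=
    div_nonneg (by linarith) (by positivity)
  have h2 : 0 < θ / p ^ 2 := div_pos (by linarith) (by positivity)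
  have h3 : 0 ≤ (θ * s ^ ϑ - s ^ ϑ * ϑ) / ϑ := div_nonneg (by linarith) hϑ0.le
  linarith [key, h1, h2, h3]
end
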